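/- Let W be the elliptic curve over ℝ with affine equation y² = x³ + x² + 4x + 4, and let P be the point (2, 2√6) on W (note (2√6)² = 24 = 2³ + 2² + 4·2 + 4). Then P has infinite order in the group of points of W: for every natural number n ≥ 1, n • P is not the identity element. -/

import Mathlib

open WeierstrassCurve

noncomputable abbrev Wc : WeierstrassCurve.Affine ℝ := ⟨0, 1, 0, 4, 4⟩

namespace EPV

local notation "v" => padicValRat 2

lemma vint (k : ℤ) (hk : ¬ (2:ℤ) ∣ k) : v (k : ℚ) = 0 := by
  rw [padicValRat.of_int, padicValInt.eq_zero_of_not_dvd hk]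
  norm_num

lemma v2 : v (2:ℚ) = 1 := padicValRat.self one_lt_two

lemma v3 : v (3:ℚ) = 0 := by
  have := vint 3 (by decide)
  norm_num at this
  exact this

lemma v5 : v (5:ℚ) = 0 := by
  have := vint 5 (by decide)
  norm_num at this
  exact this

lemma v4 : v (4:ℚ) = 2 := by
  have : (4:ℚ) = 2 * 2 := by norm_num
  rw [this, padicValRat.mul (by norm_num) (by norm_num), v2]
  norm_num

lemma v6 : v (6:ℚ) = 1 := by
  have : (6:ℚ) = 2 * 3 := by norm_num
  rw [this, padicValRat.mul (by norm_num) (by norm_num), v2, v3]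
  norm_num

lemma v12 : v (12:ℚ) = 2 := by
  have : (12:ℚ) = 4 * 3 := by norm_num
  rw [this, padicValRat.mul (by norm_num) (by norm_num), v4, v3]
  norm_num

lemma vadd {q r : ℚ} (hq : q ≠ 0) (h : r ≠ 0 → v q < v r) :
    v (q + r) = v q := by
  rcases eq_or_ne r 0 with rfl | hr
  · simp
  · have hlt := h hr
    have hqr : q + r ≠ 0 := by
      intro e
      have hrq : r = -q := by linarith [add_eq_zero_iff_eq_neg.mp e]
      rw [hrq, padicValRat.neg] at hlt
      exact lt_irrefl _ hlt
    exact padicValRat.add_eq_of_lt hqr hq hr hlt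

lemma val_rhs {a : ℚ} {n : ℤ} (hn : n ≤ -1) (hva : v a = n) (ha : a ≠ 0) :
    v (a ^ 3 + a ^ 2 + 4 * a + 4) = 3 * n := by
  have hrw : a ^ 3 + a ^ 2 + 4 * a + 4 = a ^ 3 + (a ^ 2 + (4 * a + 4)) := by ring
  have hva2 : v (a ^ 2) = 2 * n := by
    rw [padicValRat.pow a, hva]; push_cast; ring
  have hva3 : v (a ^ 3) = 3 * n := by
    rw [padicValRat.pow a, hva]; push_cast; ring
  have h4a : v (4 * a) = 2 + n := by
    rw [padicValRat.mul (by norm_num) ha, v4, hva]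
  have inner : v (a ^ 2 + (4 * a + 4)) = 2 * n := by
    rw [vadd (pow_ne_zero 2 ha) ?_, hva2]
    intro ht
    have hmin := padicValRat.min_le_padicValRat_add (p := 2) (q := 4 * a) (r := 4) ht
    rw [h4a, v4] at hmin
    have : 2 + n ≤ v (4 * a + 4) := le_trans (le_min (le_refl _) (by omega)) hmin
    omega
  rw [hrw, vadd (pow_ne_zero 3 ha) ?_, hva3]
  intro ht
  rw [inner]
  omega

lemma val_num {a : ℚ} {n : ℤ} (hn : n ≤ -1) (hva : v a = n) (ha : a ≠ 0) :
    v (3 * a ^ 2 + 2 * a + 4) = 2 * n := by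
  have hrw : 3 * a ^ 2 + 2 * a + 4 = 3 * a ^ 2 + (2 * a + 4) := by ring
  have hv3a2 : v (3 * a ^ 2) = 2 * n := by
    rw [padicValRat.mul (by norm_num) (pow_ne_zero 2 ha), v3, padicValRat.pow a, hva]
    push_cast; ring
  have h2a : v (2 * a) = 1 + n := by
    rw [padicValRat.mul (by norm_num) ha, v2, hva]
  rw [hrw, vadd (by positivity) ?_, hv3a2]
  intro ht
  have hmin := padicValRat.min_le_padicValRat_add (p := 2) (q := 2 * a) (r := 4) ht
  rw [h2a, v4] at hmin
  have : 1 + n ≤ v (2 * a + 4) := le_trans (le_min (le_refl _) (by omega)) hmin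
  rw [hv3a2]
  omega

noncomputable def s : ℝ := Real.sqrt 6

lemma s_sq : s ^ 2 = 6 := Real.sq_sqrt (by norm_num)

lemma s_pos : 0 < s := Real.sqrt_pos.mpr (by norm_num)

lemma some_eq_some {F : Type*} [Field F] {W : WeierstrassCurve.Affine F} {x₁ y₁ x₂ y₂ : F}
    (hx : x₁ = x₂) (hy : y₁ = y₂) (h₁ : W.Nonsingular x₁ y₁) (h₂ : W.Nonsingular x₂ y₂) :
    WeierstrassCurve.Affine.Point.some _ _ h₁ = WeierstrassCurve.Affine.Point.some _ _ h₂ := by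
  subst hx; subst hy; rfl

/-- slope auxiliary rational -/
def cq (a b : ℚ) : ℚ := (3 * a ^ 2 + 2 * a + 4) / (12 * b)

def xq (a b : ℚ) : ℚ := 6 * cq a b ^ 2 + (-1 - 2 * a)

def yq (a b : ℚ) : ℚ := -(cq a b * (xq a b - a) + b)

lemma curve_eq {a b : ℚ} (h : Wc.Nonsingular (a : ℝ) ((b : ℝ) * s)) :
    6 * b ^ 2 = a ^ 3 + a ^ 2 + 4 * a + 4 := by
  have hE := (Wc.equation_iff _ _).mp h.1
  simp only [Wc] at hE
  have hE' : ((6 * b ^ 2 : ℚ) : ℝ) = ((a ^ 3 + a ^ 2 + 4 * a + 4 : ℚ) : ℝ) := by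
    push_cast
    nlinarith [s_sq, hE]
  exact_mod_cast hE'

lemma double_eq {a b : ℚ} (h : Wc.Nonsingular (a : ℝ) ((b : ℝ) * s)) (hb : b ≠ 0) :
    ∃ h' : Wc.Nonsingular ((xq a b : ℚ) : ℝ) (((yq a b : ℚ) : ℝ) * s),
      (WeierstrassCurve.Affine.Point.some _ _ h) + (WeierstrassCurve.Affine.Point.some _ _ h)
        = WeierstrassCurve.Affine.Point.some _ _ h' := by
  have hs6 := s_sq
  have hsne : s ≠ 0 := ne_of_gt s_pos
  have hbR : (b : ℝ) ≠ 0 := by exact_mod_cast hb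
  have hy : (b : ℝ) * s ≠ Wc.negY a ((b : ℝ) * s) := by
    simp only [WeierstrassCurve.Affine.negY, Wc]
    intro e
    apply mul_ne_zero hbR hsne
    nlinarith [e]
  have hslope : Wc.slope a a ((b : ℝ) * s) ((b : ℝ) * s) = ((cq a b : ℚ) : ℝ) * s := by
    rw [WeierstrassCurve.Affine.slope_of_Y_ne rfl hy]
    simp only [WeierstrassCurve.Affine.negY, Wc, cq]
    push_cast
    field_simp
    linear_combination (-2) * (b:ℝ) * (3 * (a:ℝ) ^ 2 + 2 * (a:ℝ) + 4) * hs6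
  have hX : Wc.addX (a : ℝ) (a : ℝ) (Wc.slope a a ((b : ℝ) * s) ((b : ℝ) * s))
      = ((xq a b : ℚ) : ℝ) := by
    rw [hslope]
    simp only [WeierstrassCurve.Affine.addX, Wc, xq]
    push_cast
    linear_combination ((cq a b : ℚ) : ℝ) ^ 2 * hs6
  have hY : Wc.addY (a : ℝ) (a : ℝ) ((b : ℝ) * s) (Wc.slope a a ((b : ℝ) * s) ((b : ℝ) * s))
      = ((yq a b : ℚ) : ℝ) * s := by
    rw [WeierstrassCurve.Affine.addY, WeierstrassCurve.Affine.negAddY, hX, hslope]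
    simp only [WeierstrassCurve.Affine.negY, Wc, yq]
    push_cast
    ring
  have h'' := WeierstrassCurve.Affine.nonsingular_add h h (fun hxy => hy hxy.right)
  have h' : Wc.Nonsingular ((xq a b : ℚ) : ℝ) (((yq a b : ℚ) : ℝ) * s) := by
    rw [← hX, ← hY]; exact h''
  refine ⟨h', ?_⟩
  rw [WeierstrassCurve.Affine.Point.add_self_of_Y_ne hy]
  exact some_eq_some hX hY _ _


def Good (n : ℤ) (Pt : Wc.Point) : Prop :=
  ∃ (a b : ℚ) (h : Wc.Nonsingular (a : ℝ) ((b : ℝ) * s)),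
    Pt = WeierstrassCurve.Affine.Point.some _ _ h ∧ v a = n

lemma good_double {n : ℤ} (hn : n ≤ -1) {Pt : Wc.Point} :
    Good n Pt → Good (n - 2) (Pt + Pt) := by
  rintro ⟨a, b, h, rfl, hva⟩
  have ha : a ≠ 0 := by
    intro e; rw [e, padicValRat.zero] at hva; omega
  have heq := curve_eq h
  have hvR := val_rhs hn hva ha
  have hb : b ≠ 0 := by
    intro e
    rw [← heq, e] at hvR
    norm_num [padicValRat.zero] at hvR
    omega
  have hvb : 2 * v b = 3 * n - 1 := by
    have h6b : v (6 * b ^ 2) = 1 + 2 * v b := by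
      rw [padicValRat.mul (by norm_num) (pow_ne_zero 2 hb), v6, padicValRat.pow b]
      push_cast; ring
    rw [heq, hvR] at h6b
    omega
  obtain ⟨h', hdouble⟩ := double_eq h hb
  have hnum : v (3 * a ^ 2 + 2 * a + 4) = 2 * n := val_num hn hva ha
  have hnum0 : 3 * a ^ 2 + 2 * a + 4 ≠ 0 := by
    intro e; rw [e, padicValRat.zero] at hnum; omega
  have hc0 : cq a b ≠ 0 := div_ne_zero hnum0 (mul_ne_zero (by norm_num) hb)
  have hvc2 : 2 * v (cq a b) = n - 3 := by
    rw [cq, padicValRat.div hnum0 (mul_ne_zero (by norm_num) hb),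
      padicValRat.mul (by norm_num : (12:ℚ) ≠ 0) hb, hnum, v12]
    omega
  have hq6 : v (6 * cq a b ^ 2) = n - 2 := by
    rw [padicValRat.mul (by norm_num) (pow_ne_zero 2 hc0), v6, padicValRat.pow (cq a b)]
    push_cast
    omega
  have hvx : v (xq a b) = n - 2 := by
    rw [xq, vadd (mul_ne_zero (by norm_num) (pow_ne_zero 2 hc0)) ?_, hq6]
    intro ht
    rw [hq6]
    have hrw : (-1 - 2 * a : ℚ) = (-1) + (-(2 * a)) := by ring
    have hne : ((-1 : ℚ)) + (-(2 * a)) ≠ 0 := by rw [← hrw]; exact ht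
    have hmin := padicValRat.min_le_padicValRat_add (p := 2) hne
    have hv1 : v ((-1 : ℚ)) = 0 := by rw [show ((-1:ℚ)) = -(1:ℚ) by norm_num, padicValRat.neg, padicValRat.one]
    have hv2a : v (-(2 * a)) = 1 + n := by
      rw [padicValRat.neg, padicValRat.mul (by norm_num) ha, v2, hva]
    rw [hv1, hv2a] at hmin
    have : 1 + n ≤ v (-1 - 2 * a) := by
      rw [hrw]
      exact le_trans (le_min (by omega) (le_refl _)) hmin
    omega
  exact ⟨xq a b, yq a b, h', hdouble, hvx⟩

lemma good_base (h : Wc.Nonsingular 2 (2 * s)) :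
    Good (-1) (WeierstrassCurve.Affine.Point.some _ _ h + WeierstrassCurve.Affine.Point.some _ _ h) := by
  have e1 : ((2:ℚ):ℝ) = 2 := by norm_num
  have h2 : Wc.Nonsingular (((2:ℚ)):ℝ) (((2:ℚ):ℝ) * s) := by rw [e1]; exact h
  have hsome : WeierstrassCurve.Affine.Point.some _ _ h = WeierstrassCurve.Affine.Point.some _ _ h2 :=
    some_eq_some e1.symm (by rw [e1]) h h2
  obtain ⟨h', hd⟩ := double_eq h2 (by norm_num)
  refine ⟨xq 2 2, yq 2 2, h', ?_, ?_⟩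
  · rw [hsome]; exact hd
  · have hx : xq 2 2 = -5 / 6 := by norm_num [xq, cq]
    rw [hx, show ((-5 : ℚ) / 6) = ((-5 : ℚ)) / 6 from rfl,
      padicValRat.div (by norm_num) (by norm_num),
      show ((-5:ℚ)) = -(5:ℚ) by norm_num, padicValRat.neg, v5, v6]
    norm_num

lemma good_pow (h : Wc.Nonsingular 2 (2 * s)) (k : ℕ) :
    Good (-1 - 2 * k)
      ((2 ^ k) • (WeierstrassCurve.Affine.Point.some _ _ h + WeierstrassCurve.Affine.Point.some _ _ h)) := by
  induction k with
  | zero => simpa using good_base h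
  | succ k ih =>
      have hdd := good_double (n := -1 - 2 * k) (by omega) ih
      have hcoef : (-1 - 2 * ((k : ℤ) + 1)) = (-1 - 2 * k) - 2 := by ring
      have hsm : (2 ^ (k + 1)) •
            (WeierstrassCurve.Affine.Point.some _ _ h + WeierstrassCurve.Affine.Point.some _ _ h)
          = (2 ^ k) • (WeierstrassCurve.Affine.Point.some _ _ h + WeierstrassCurve.Affine.Point.some _ _ h)
            + (2 ^ k) • (WeierstrassCurve.Affine.Point.some _ _ h + WeierstrassCurve.Affine.Point.some _ _ h) := by
        rw [← add_nsmul]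
        congr 1
        rw [pow_succ]
        omega
      rw [show ((-1 : ℤ) - 2 * ((k : ℕ) + 1 : ℕ)) = (-1 - 2 * k) - 2 by push_cast; ring, hsm]
      exact hdd


lemma good_inj {n₁ n₂ : ℤ} {Pt : Wc.Point} (h₁ : Good n₁ Pt) (h₂ : Good n₂ Pt) : n₁ = n₂ := by
  obtain ⟨a₁, b₁, hh₁, rfl, hv₁⟩ := h₁
  obtain ⟨a₂, b₂, hh₂, he₂, hv₂⟩ := h₂
  injection he₂ with hx hy
  have : a₁ = a₂ := by exact_mod_cast hx
  rw [← hv₁, ← hv₂, this]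

end EPV

/-- The point `(2, 2√6)` on the elliptic curve `y² = x³ + x² + 4x + 4` over `ℝ` has
infinite order: no positive multiple of it is the identity. -/
theorem point_two_two_sqrt_six_infinite_order (W : WeierstrassCurve ℝ)
    (hW : W = ⟨0, 1, 0, 4, 4⟩)
    (h : W.toAffine.Nonsingular 2 (2 * Real.sqrt 6)) :
    ∀ n : ℕ, 1 ≤ n → n • (WeierstrassCurve.Affine.Point.some _ _ h) ≠ 0 := by
  subst hW
  intro n hn hPn
  haveI : NeZero n := ⟨by omega⟩
  set P : Wc.Point := WeierstrassCurve.Affine.Point.some _ _ h with hP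
  -- pigeonhole on powers of 2 mod n
  obtain ⟨i, j, hij, hij2⟩ :=
    Finite.exists_ne_map_eq_of_infinite (f := fun k : ℕ => ((2 : ZMod n)) ^ (k + 1))
  wlog hlt : i < j generalizing i j
  · exact this j i hij.symm hij2.symm (by omega)
  have hmod : ((2 ^ (i + 1) : ℕ) : ZMod n) = ((2 ^ (j + 1) : ℕ) : ZMod n) := by
    push_cast
    exact hij2
  have hdvd : (2 : ℕ) ^ (i + 1) ≡ 2 ^ (j + 1) [MOD n] := (ZMod.natCast_eq_natCast_iff _ _ _).mp hmod
  have hle : (2 : ℕ) ^ (i + 1) ≤ 2 ^ (j + 1) := Nat.pow_le_pow_right (by norm_num) (by omega)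
  obtain ⟨c, hc⟩ := (Nat.modEq_iff_dvd' hle).mp hdvd
  have hc' : 2 ^ (j + 1) = 2 ^ (i + 1) + n * c := by omega
  have hsmul : (2 ^ (j + 1)) • P = (2 ^ (i + 1)) • P := by
    rw [hc', add_nsmul, mul_nsmul, hPn, nsmul_zero, add_zero]
  have hQ : ∀ k : ℕ, (2 ^ (k + 1)) • P = (2 ^ k) • (P + P) := by
    intro k
    rw [← two_nsmul, ← mul_nsmul, mul_comm, pow_succ]
  have hg₁ := EPV.good_pow h i
  have hg₂ := EPV.good_pow h j
  change EPV.Good _ (2 ^ i • (P + P)) at hg₁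
  change EPV.Good _ (2 ^ j • (P + P)) at hg₂
  rw [← hQ i] at hg₁
  rw [← hQ j, hsmul] at hg₂
  have := EPV.good_inj hg₁ hg₂
  omega
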